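/- Let X be a beta prime random variable with parameters α, β > 0, having PDF f(x) = x^{α-1}(1+x)^{-α-β}/B(α,β) and CDF F on (0, ∞). For all x > α/β, 1 - F(x) ≥ x^α (1+x)^{1-α-β} (βx - α) / (B(α,β)(α² + β²x² + x(-2αβ + α + β))). -/

import Mathlib

open MeasureTheory Set Filter

section Stmt19Aux
variable {α β : ℝ}

lemma real_beta (hα : 0 < α) (hβ : 0 < β) :
    ∫ u in (0:ℝ)..1, u ^ (α-1) * (1-u) ^ (β-1) =
      Real.Gamma α * Real.Gamma β / Real.Gamma (α+β) := by
  have hre : (0:ℝ) < Complex.re ↑α := by simpa using hα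
  have hre' : (0:ℝ) < Complex.re ↑β := by simpa using hβ
  have key := Complex.Gamma_mul_Gamma_eq_betaIntegral hre hre'
  have hbeta : Complex.betaIntegral ↑α ↑β
      = ((∫ u in (0:ℝ)..1, u ^ (α-1) * (1-u) ^ (β-1) : ℝ) : ℂ) := by
    rw [Complex.betaIntegral, ← intervalIntegral.integral_ofReal]
    apply intervalIntegral.integral_congr
    intro u hu
    rw [uIcc_of_le (by norm_num : (0:ℝ) ≤ 1)] at hu
    obtain ⟨h0, h1⟩ := hu
    push_cast
    rw [Complex.ofReal_cpow h0, Complex.ofReal_cpow (by linarith)]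
    push_cast
    ring
  rw [hbeta, ← Complex.ofReal_add, Complex.Gamma_ofReal, Complex.Gamma_ofReal,
    Complex.Gamma_ofReal, ← Complex.ofReal_mul, ← Complex.ofReal_mul] at key
  have := Complex.ofReal_inj.mp key
  have hG : Real.Gamma (α+β) ≠ 0 := (Real.Gamma_pos_of_pos (by linarith)).ne'
  field_simp
  linarith [this]

lemma beta_integrable (hα : 0 < α) (hβ : 0 < β) :
    IntegrableOn (fun u : ℝ => u ^ (α-1) * (1-u) ^ (β-1)) (Ioo (0:ℝ) 1) := by
  have hre : (0:ℝ) < Complex.re ↑α := by simpa using hα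
  have hre' : (0:ℝ) < Complex.re ↑β := by simpa using hβ
  have h := (Complex.betaIntegral_convergent hre hre').norm
  rw [intervalIntegrable_iff_integrableOn_Ioc_of_le (by norm_num : (0:ℝ) ≤ 1)] at h
  refine (h.mono_set Ioo_subset_Ioc_self).congr_fun ?_ measurableSet_Ioo
  intro u hu
  obtain ⟨h0, h1⟩ := hu
  simp only [norm_mul]
  rw [Complex.norm_cpow_eq_rpow_re_of_pos (by exact_mod_cast h0)]
  · rw [show ((1:ℂ) - ↑u) = ((1-u : ℝ) : ℂ) by push_cast; ring,
      Complex.norm_cpow_eq_rpow_re_of_pos (by linarith)]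
    norm_num

lemma cv_aux (hα : 0 < α) (hβ : 0 < β) :
    (∀ u ∈ Ioo (0:ℝ) 1, HasDerivWithinAt (fun u : ℝ => u / (1-u)) ((1-u)⁻¹^2) (Ioo 0 1) u)
    ∧ InjOn (fun u : ℝ => u / (1-u)) (Ioo 0 1)
    ∧ (fun u : ℝ => u / (1-u)) '' (Ioo 0 1) = Ioi 0 := by
  refine ⟨?_, ?_, ?_⟩
  · intro u hu
    obtain ⟨h0, h1⟩ := hu
    have hne : (1:ℝ) - u ≠ 0 := by linarith
    have := (hasDerivAt_id u).div ((hasDerivAt_id u).const_sub 1) hne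
    refine (this.congr_deriv ?_).hasDerivWithinAt
    simp only [id_eq, inv_pow]
    ring
  · intro a ha b hb hab
    simp only [mem_Ioo] at ha hb
    have h1 : (1:ℝ) - a ≠ 0 := by linarith [ha.2]
    have h2 : (1:ℝ) - b ≠ 0 := by linarith [hb.2]
    field_simp at hab
    linarith
  · ext t
    simp only [mem_image, mem_Ioo, mem_Ioi]
    constructor
    · rintro ⟨u, ⟨h0, h1⟩, rfl⟩
      exact div_pos h0 (by linarith)
    · intro ht
      refine ⟨t / (1+t), ⟨by positivity, ?_⟩, ?_⟩
      · rw [div_lt_one (by linarith)]; linarith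
      · have h1t : (1:ℝ) + t ≠ 0 := by positivity
        field_simp
        ring

lemma cv_integrand (hα : 0 < α) (hβ : 0 < β) {u : ℝ} (hu : u ∈ Ioo (0:ℝ) 1) :
    |(1-u)⁻¹^2| • ((fun t : ℝ => t ^ (α-1) * (1+t) ^ (-α-β)) (u / (1-u)))
      = u ^ (α-1) * (1-u) ^ (β-1) := by
  obtain ⟨h0, h1⟩ := hu
  have h1u : (0:ℝ) < 1 - u := by linarith
  have e1 : (1:ℝ) + u / (1-u) = (1-u)⁻¹ := by field_simp; ring
  have e2 : (u / (1-u)) ^ (α-1) = u ^ (α-1) * (1-u) ^ (-(α-1)) := by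
    rw [Real.div_rpow h0.le h1u.le, div_eq_mul_inv, Real.rpow_neg h1u.le]
  have e3 : ((1-u)⁻¹) ^ (-α-β) = (1-u) ^ (α+β) := by
    rw [Real.inv_rpow h1u.le, ← Real.rpow_neg h1u.le]
    ring_nf
  have e4 : |(1-u)⁻¹^2| = (1-u) ^ (-2 : ℝ) := by
    rw [abs_of_pos (by positivity), Real.rpow_neg h1u.le, Real.rpow_two, inv_pow]
  rw [smul_eq_mul]
  show |(1-u)⁻¹^2| * ((u/(1-u)) ^ (α-1) * (1+u/(1-u)) ^ (-α-β)) = _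
  calc |(1-u)⁻¹^2| * ((u/(1-u)) ^ (α-1) * (1+u/(1-u)) ^ (-α-β))
      = u ^ (α-1) * ((1-u) ^ (-2:ℝ) * ((1-u) ^ (-(α-1)) * (1-u) ^ (α+β))) := by
        rw [e1, e2, e3, e4]; ring
    _ = u ^ (α-1) * (1-u) ^ (β-1) := by
        rw [← Real.rpow_add h1u, ← Real.rpow_add h1u]
        congr 1
        ring

lemma total_integral (hα : 0 < α) (hβ : 0 < β) :
    IntegrableOn (fun t : ℝ => t ^ (α-1) * (1+t) ^ (-α-β)) (Ioi (0:ℝ))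
    ∧ ∫ t in Ioi (0:ℝ), t ^ (α-1) * (1+t) ^ (-α-β)
        = Real.Gamma α * Real.Gamma β / Real.Gamma (α+β) := by
  obtain ⟨hder, hinj, himg⟩ := cv_aux hα hβ
  have hmeas : MeasurableSet (Ioo (0:ℝ) 1) := measurableSet_Ioo
  have hbint : IntegrableOn (fun u : ℝ => u ^ (α-1) * (1-u) ^ (β-1)) (Ioo (0:ℝ) 1) :=
    beta_integrable hα hβ
  have hbval : ∫ u in (0:ℝ)..1, u ^ (α-1) * (1-u) ^ (β-1) =
      Real.Gamma α * Real.Gamma β / Real.Gamma (α+β) := real_beta hα hβ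
  constructor
  · rw [← himg]
    rw [integrableOn_image_iff_integrableOn_abs_deriv_smul hmeas hder hinj]
    exact hbint.congr_fun (fun u hu => (cv_integrand hα hβ hu).symm) hmeas
  · rw [← himg, integral_image_eq_integral_abs_deriv_smul hmeas hder hinj]
    rw [setIntegral_congr_fun hmeas (fun u hu => cv_integrand hα hβ hu)]
    rw [← integral_Ioc_eq_integral_Ioo,
      ← intervalIntegral.integral_of_le (by norm_num : (0:ℝ) ≤ 1)]
    exact hbval

lemma hQ_pos (hα : 0 < α) (hβ : 0 < β) {t : ℝ} (ht : 0 < t) :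
    0 < α ^ 2 + β ^ 2 * t ^ 2 + t * (-2 * α * β + α + β) := by
  have : α ^ 2 + β ^ 2 * t ^ 2 + t * (-2 * α * β + α + β)
      = (β * t - α) ^ 2 + t * (α + β) := by ring
  rw [this]; positivity

lemma tends_zero (hα : 0 < α) (hβ : 0 < β) {B : ℝ} (hB : 0 < B) :
    Tendsto (fun y : ℝ => y ^ α * (1+y) ^ (1-α-β) * (β*y-α) /
      (B * (α ^ 2 + β ^ 2 * y ^ 2 + y * (-2 * α * β + α + β)))) atTop (nhds 0) := by
  have hup : Tendsto (fun y : ℝ => 16 / (B*β) * (1+y) ^ (-β)) atTop (nhds 0) := by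
    have h1 : Tendsto (fun y : ℝ => 1 + y) atTop atTop :=
      tendsto_atTop_add_const_left _ 1 tendsto_id
    have h2 := (tendsto_rpow_neg_atTop hβ).comp h1
    simpa using h2.const_mul (16 / (B*β))
  refine tendsto_of_tendsto_of_tendsto_of_le_of_le' tendsto_const_nhds hup ?_ ?_
  · filter_upwards [eventually_ge_atTop (max 1 (2*α/β))] with y hy
    have hy1 : (1:ℝ) ≤ y := le_trans (le_max_left _ _) hy
    have hy2 : 2*α/β ≤ y := le_trans (le_max_right _ _) hy
    have hy0 : (0:ℝ) < y := by linarith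
    have hba : α ≤ β * y := by
      rw [div_le_iff₀ hβ] at hy2; nlinarith
    have hq := hQ_pos hα hβ hy0
    apply div_nonneg _ (by positivity)
    have n1 : (0:ℝ) ≤ y ^ α := Real.rpow_nonneg hy0.le α
    have n2 : (0:ℝ) ≤ (1+y) ^ (1-α-β) := Real.rpow_nonneg (by linarith) _
    exact mul_nonneg (mul_nonneg n1 n2) (by linarith)
  · filter_upwards [eventually_ge_atTop (max 1 (2*α/β))] with y hy
    have hy1 : (1:ℝ) ≤ y := le_trans (le_max_left _ _) hy
    have hy2 : 2*α/β ≤ y := le_trans (le_max_right _ _) hy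
    have hy0 : (0:ℝ) < y := by linarith
    have h1y : (0:ℝ) < 1 + y := by linarith
    have hba : 2*α ≤ β * y := by rw [div_le_iff₀ hβ] at hy2; nlinarith
    -- numerator bound
    have hnum : y ^ α * (1+y) ^ (1-α-β) * (β*y-α) ≤ β * 4 * y^2 * (1+y) ^ (-β) := by
      have s1 : y ^ α ≤ (1+y) ^ α :=
        Real.rpow_le_rpow hy0.le (by linarith) hα.le
      have s2 : β*y - α ≤ β * (1+y) := by nlinarith
      have s3 : y ^ α * (1+y) ^ (1-α-β) * (β*y-α)
          ≤ (1+y) ^ α * (1+y) ^ (1-α-β) * (β * (1+y)) := by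
        have n1 : (0:ℝ) ≤ (1+y) ^ (1-α-β) := Real.rpow_nonneg h1y.le _
        have n2 : (0:ℝ) ≤ β*y - α := by nlinarith
        have n3 : (0:ℝ) ≤ (1+y) ^ α := Real.rpow_nonneg h1y.le _
        have := mul_le_mul_of_nonneg_right (mul_le_mul_of_nonneg_right s1 n1) n2
        have h4 : (1+y) ^ α * (1+y) ^ (1-α-β) * (β*y-α)
            ≤ (1+y) ^ α * (1+y) ^ (1-α-β) * (β*(1+y)) := by
          apply mul_le_mul_of_nonneg_left s2 (by positivity)
        linarith
      have s4 : (1+y) ^ α * (1+y) ^ (1-α-β) * (β * (1+y))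
          = β * ((1+y)^2 * (1+y) ^ (-β)) := by
        rw [← Real.rpow_add h1y, show α + (1-α-β) = -β + 1 by ring,
          Real.rpow_add h1y, Real.rpow_one]
        ring
      have s5 : (1+y)^2 ≤ 4*y^2 := by nlinarith
      have s6 : β * ((1+y)^2 * (1+y) ^ (-β)) ≤ β * (4*y^2 * (1+y) ^ (-β)) := by
        apply mul_le_mul_of_nonneg_left _ hβ.le
        apply mul_le_mul_of_nonneg_right s5 (Real.rpow_nonneg h1y.le _)
      calc y ^ α * (1+y) ^ (1-α-β) * (β*y-α)
          ≤ β * ((1+y)^2 * (1+y) ^ (-β)) := by rw [← s4]; exact s3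
        _ ≤ β * (4*y^2 * (1+y) ^ (-β)) := s6
        _ = β * 4 * y^2 * (1+y) ^ (-β) := by ring
    -- denominator bound
    have hden : B * β^2 * y^2 / 4 ≤ B * (α ^ 2 + β ^ 2 * y ^ 2 + y * (-2 * α * β + α + β)) := by
      have : (β*y/2)^2 ≤ (β*y - α)^2 := by nlinarith
      have hqlb : β^2*y^2/4 ≤ α ^ 2 + β ^ 2 * y ^ 2 + y * (-2 * α * β + α + β) := by
        nlinarith
      nlinarith
    have hub : y ^ α * (1+y) ^ (1-α-β) * (β*y-α) /
        (B * (α ^ 2 + β ^ 2 * y ^ 2 + y * (-2 * α * β + α + β)))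
        ≤ (β * 4 * y^2 * (1+y) ^ (-β)) / (B * β^2 * y^2 / 4) := by
      apply div_le_div₀ (by positivity) hnum (by positivity) hden
    refine le_trans hub (le_of_eq ?_)
    field_simp
    ring

lemma hasDeriv_h (hα : 0 < α) (hβ : 0 < β) {B t : ℝ} (hB : 0 < B) (ht : 0 < t) :
    HasDerivAt (fun t : ℝ => t ^ α * (1+t) ^ (1-α-β) * (β*t-α) /
        (B * (α ^ 2 + β ^ 2 * t ^ 2 + t * (-2 * α * β + α + β))))
      ((t ^ (α-1) * (1+t) ^ (-α-β) / B) *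
        ((α+β) * (α+β*t) * (t*(1+t)) /
          (α ^ 2 + β ^ 2 * t ^ 2 + t * (-2 * α * β + α + β)) ^ 2 - 1)) t := by
  have h1t : (0:ℝ) < 1 + t := by linarith
  have hQ := hQ_pos hα hβ ht
  have hDne : B * (α ^ 2 + β ^ 2 * t ^ 2 + t * (-2 * α * β + α + β)) ≠ 0 := by positivity
  -- derivative of t ^ α
  have d1 : HasDerivAt (fun t : ℝ => t ^ α) (α * t ^ (α-1)) t :=
    Real.hasDerivAt_rpow_const (Or.inl ht.ne')
  -- derivative of (1+t) ^ (1-α-β)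
  have d2 : HasDerivAt (fun t : ℝ => (1+t) ^ (1-α-β)) ((1-α-β) * (1+t) ^ (-α-β)) t := by
    have base : HasDerivAt (fun t : ℝ => 1 + t) 1 t := (hasDerivAt_id t).const_add 1
    have := (Real.hasDerivAt_rpow_const (p := 1-α-β) (Or.inl h1t.ne')).comp t base
    simp only [show (1-α-β) - 1 = -α-β by ring, mul_one] at this
    exact this
  have d3 : HasDerivAt (fun t : ℝ => β*t-α) β t := by
    simpa using ((hasDerivAt_id t).const_mul β).sub_const α
  have dN := (d1.mul d2).mul d3
  have dQ : HasDerivAt (fun t : ℝ => α ^ 2 + β ^ 2 * t ^ 2 + t * (-2 * α * β + α + β))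
      (β ^ 2 * (2*t) + (-2 * α * β + α + β)) t := by
    have h1 : HasDerivAt (fun t : ℝ => β ^ 2 * t ^ 2) (β ^ 2 * (2*t)) t := by
      simpa using (hasDerivAt_pow 2 t).const_mul (β^2)
    have h2 : HasDerivAt (fun t : ℝ => t * (-2 * α * β + α + β)) (-2 * α * β + α + β) t := by
      simpa using (hasDerivAt_id t).mul_const (-2 * α * β + α + β)
    exact (h1.const_add (α^2)).add h2
  have dD := dQ.const_mul B
  have main := dN.div dD hDne
  refine main.congr_deriv ?_
  simp only [Pi.mul_apply]
  symm
  have e1 : t ^ α = t ^ (α-1) * t := by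
    rw [← Real.rpow_add_one ht.ne']; congr 1; ring
  have e2 : (1+t) ^ (1-α-β) = (1+t) ^ (-α-β) * (1+t) := by
    rw [← Real.rpow_add_one h1t.ne']; congr 1; ring
  rw [e1, e2]
  have hB' : B ≠ 0 := hB.ne'
  have hQ' : α ^ 2 + β ^ 2 * t ^ 2 + t * (-2 * α * β + α + β) ≠ 0 := hQ.ne'
  generalize t ^ (α-1) = u
  generalize (1+t) ^ (-α-β) = v
  set q : ℝ := α ^ 2 + β ^ 2 * t ^ 2 + t * (-2 * α * β + α + β) with hq
  have L : (u * v / B) * ((α+β) * (α+β*t) * (t*(1+t)) / q ^ 2 - 1)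
      = (u * v * ((α+β) * (α+β*t) * (t*(1+t)) - q ^ 2)) / (B * q ^ 2) := by
    field_simp
  rw [L]
  have R : (((α * u * (v * (1+t)) + u * t * ((1 - α - β) * v)) * (β * t - α) +
        u * t * (v * (1+t)) * β) * (B * q) -
        u * t * (v * (1+t)) * (β * t - α) * (B * (β ^ 2 * (2 * t) + (-2 * α * β + α + β))))
      = B * (((α * u * (v * (1+t)) + u * t * ((1 - α - β) * v)) * (β * t - α) +
        u * t * (v * (1+t)) * β) * q -
        u * t * (v * (1+t)) * (β * t - α) * (β ^ 2 * (2 * t) + (-2 * α * β + α + β))) := by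
    ring
  rw [R, mul_pow, show B ^ 2 * q ^ 2 = B * (B * q ^ 2) by ring,
    mul_div_mul_left _ _ hB']
  congr 1
  rw [hq]
  ring

lemma cont_f (hα : 0 < α) (hβ : 0 < β) {B : ℝ} (hB : 0 < B) {s : Set ℝ}
    (hs : ∀ t ∈ s, (0:ℝ) < t) :
    ContinuousOn (fun t : ℝ => t ^ (α-1) * (1+t) ^ (-α-β) / B) s := by
  apply ContinuousOn.div_const
  apply ContinuousOn.mul
  · exact continuousOn_id.rpow_const (fun t ht => Or.inl (hs t ht).ne')
  · exact (continuousOn_const.add continuousOn_id).rpow_const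
      (fun t ht => Or.inl (by have := hs t ht; simp only [Pi.add_apply, id_eq]; intro h; linarith))

lemma key_ineq (hα : 0 < α) (hβ : 0 < β) {B x y : ℝ} (hB : 0 < B)
    (hx : 0 < x) (hxy : x ≤ y) :
    x ^ α * (1+x) ^ (1-α-β) * (β*x-α) /
        (B * (α ^ 2 + β ^ 2 * x ^ 2 + x * (-2 * α * β + α + β)))
      - y ^ α * (1+y) ^ (1-α-β) * (β*y-α) /
        (B * (α ^ 2 + β ^ 2 * y ^ 2 + y * (-2 * α * β + α + β)))
      ≤ ∫ t in x..y, t ^ (α-1) * (1+t) ^ (-α-β) / B := by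
  have huIcc : uIcc x y = Icc x y := uIcc_of_le hxy
  have hmem : ∀ t ∈ Icc x y, (0:ℝ) < t := fun t ht => lt_of_lt_of_le hx ht.1
  -- continuity of the derivative
  have hcont : ContinuousOn (fun t : ℝ => (t ^ (α-1) * (1+t) ^ (-α-β) / B) *
      ((α+β) * (α+β*t) * (t*(1+t)) /
        (α ^ 2 + β ^ 2 * t ^ 2 + t * (-2 * α * β + α + β)) ^ 2 - 1)) (Icc x y) := by
    apply ContinuousOn.mul (cont_f hα hβ hB hmem)
    apply ContinuousOn.sub _ continuousOn_const
    apply ContinuousOn.div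
    · fun_prop
    · fun_prop
    · intro t ht
      exact pow_ne_zero 2 (hQ_pos hα hβ (hmem t ht)).ne'
  have hderiv : ∀ t ∈ uIcc x y, HasDerivAt (fun t : ℝ => t ^ α * (1+t) ^ (1-α-β) * (β*t-α) /
      (B * (α ^ 2 + β ^ 2 * t ^ 2 + t * (-2 * α * β + α + β))))
      ((t ^ (α-1) * (1+t) ^ (-α-β) / B) *
        ((α+β) * (α+β*t) * (t*(1+t)) /
          (α ^ 2 + β ^ 2 * t ^ 2 + t * (-2 * α * β + α + β)) ^ 2 - 1)) t := by
    intro t ht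
    rw [huIcc] at ht
    exact hasDeriv_h hα hβ hB (hmem t ht)
  have hint : IntervalIntegrable (fun t : ℝ => (t ^ (α-1) * (1+t) ^ (-α-β) / B) *
      ((α+β) * (α+β*t) * (t*(1+t)) /
        (α ^ 2 + β ^ 2 * t ^ 2 + t * (-2 * α * β + α + β)) ^ 2 - 1)) MeasureTheory.volume x y := by
    apply ContinuousOn.intervalIntegrable
    rwa [huIcc]
  have hftc := intervalIntegral.integral_eq_sub_of_hasDerivAt hderiv hint
  have hfint : IntervalIntegrable (fun t : ℝ => t ^ (α-1) * (1+t) ^ (-α-β) / B)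
      MeasureTheory.volume x y := by
    apply ContinuousOn.intervalIntegrable
    rw [huIcc]
    exact cont_f hα hβ hB hmem
  have hmono : ∫ t in x..y, -((t ^ (α-1) * (1+t) ^ (-α-β) / B) *
      ((α+β) * (α+β*t) * (t*(1+t)) /
        (α ^ 2 + β ^ 2 * t ^ 2 + t * (-2 * α * β + α + β)) ^ 2 - 1))
      ≤ ∫ t in x..y, t ^ (α-1) * (1+t) ^ (-α-β) / B := by
    apply intervalIntegral.integral_mono_on hxy hint.neg hfint
    intro t ht
    simp only [Pi.neg_apply]
    have ht0 := hmem t ht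
    have hA : (0:ℝ) ≤ t ^ (α-1) * (1+t) ^ (-α-β) / B := by
      have n1 : (0:ℝ) ≤ t ^ (α-1) := Real.rpow_nonneg ht0.le _
      have n2 : (0:ℝ) ≤ (1+t) ^ (-α-β) := Real.rpow_nonneg (by linarith) _
      positivity
    have hS : (0:ℝ) ≤ (α+β) * (α+β*t) * (t*(1+t)) /
        (α ^ 2 + β ^ 2 * t ^ 2 + t * (-2 * α * β + α + β)) ^ 2 := by
      have h1 : (0:ℝ) ≤ (α+β) * (α+β*t) * (t*(1+t)) := by positivity
      positivity
    nlinarith [mul_nonneg hA hS]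
  rw [intervalIntegral.integral_neg, hftc] at hmono
  linarith

end Stmt19Aux

theorem stmt_19 (α β : ℝ) (hα : 0 < α) (hβ : 0 < β) :
    ∀ x : ℝ, α / β < x →
      1 - (∫ t in (0 : ℝ)..x,
            t ^ (α - 1) * (1 + t) ^ (-α - β) /
              (Real.Gamma α * Real.Gamma β / Real.Gamma (α + β)))
        ≥ x ^ α * (1 + x) ^ (1 - α - β) * (β * x - α) /
            ((Real.Gamma α * Real.Gamma β / Real.Gamma (α + β)) *
              (α ^ 2 + β ^ 2 * x ^ 2 + x * (-2 * α * β + α + β))) := by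
  intro x hx
  have hB : 0 < Real.Gamma α * Real.Gamma β / Real.Gamma (α + β) :=
    div_pos (mul_pos (Real.Gamma_pos_of_pos hα) (Real.Gamma_pos_of_pos hβ))
      (Real.Gamma_pos_of_pos (by linarith))
  set B := Real.Gamma α * Real.Gamma β / Real.Gamma (α + β) with hBdef
  have hx0 : 0 < x := lt_of_le_of_lt (by positivity) hx
  obtain ⟨hInt, hVal⟩ := total_integral hα hβ
  set f : ℝ → ℝ := fun t => t ^ (α - 1) * (1 + t) ^ (-α - β) / B with hfdef
  have hfInt : IntegrableOn f (Ioi (0:ℝ)) := hInt.div_const B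
  have hfone : ∫ t in Ioi (0:ℝ), f t = 1 := by
    rw [hfdef]
    simp only [MeasureTheory.integral_div]
    rw [hVal, ← hBdef, div_self hB.ne']
  have hfnn : (0 : ℝ → ℝ) ≤ᵐ[MeasureTheory.volume.restrict (Ioi (0:ℝ))] f := by
    refine (MeasureTheory.ae_restrict_iff' measurableSet_Ioi).2 ?_
    filter_upwards with t ht
    have ht0 : (0:ℝ) < t := ht
    have n1 : (0:ℝ) ≤ t ^ (α-1) := Real.rpow_nonneg ht0.le _
    have n2 : (0:ℝ) ≤ (1+t) ^ (-α-β) := Real.rpow_nonneg (by linarith) _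
    simp only [Pi.zero_apply, hfdef]
    positivity
  -- for every y ≥ x
  have hbound : ∀ y : ℝ, x ≤ y →
      (∫ t in (0:ℝ)..x, f t) +
        (x ^ α * (1+x) ^ (1-α-β) * (β*x-α) /
          (B * (α ^ 2 + β ^ 2 * x ^ 2 + x * (-2 * α * β + α + β)))
        - y ^ α * (1+y) ^ (1-α-β) * (β*y-α) /
          (B * (α ^ 2 + β ^ 2 * y ^ 2 + y * (-2 * α * β + α + β)))) ≤ 1 := by
    intro y hxy
    have hk := key_ineq hα hβ hB hx0 hxy
    have i1 : IntervalIntegrable f MeasureTheory.volume 0 x := by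
      rw [intervalIntegrable_iff_integrableOn_Ioc_of_le hx0.le]
      exact hfInt.mono_set Ioc_subset_Ioi_self
    have i2 : IntervalIntegrable f MeasureTheory.volume x y := by
      rw [intervalIntegrable_iff_integrableOn_Ioc_of_le hxy]
      exact hfInt.mono_set (fun t ht => lt_trans hx0 ht.1)
    have hadd : (∫ t in (0:ℝ)..x, f t) + ∫ t in x..y, f t = ∫ t in (0:ℝ)..y, f t :=
      intervalIntegral.integral_add_adjacent_intervals i1 i2
    have hle1 : ∫ t in (0:ℝ)..y, f t ≤ 1 := by
      rw [intervalIntegral.integral_of_le (le_trans hx0.le hxy), ← hfone]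
      exact MeasureTheory.setIntegral_mono_set hfInt hfnn
        (HasSubset.Subset.eventuallyLE Ioc_subset_Ioi_self)
    linarith
  have htend : Tendsto (fun y : ℝ => (∫ t in (0:ℝ)..x, f t) +
      (x ^ α * (1+x) ^ (1-α-β) * (β*x-α) /
        (B * (α ^ 2 + β ^ 2 * x ^ 2 + x * (-2 * α * β + α + β)))
      - y ^ α * (1+y) ^ (1-α-β) * (β*y-α) /
        (B * (α ^ 2 + β ^ 2 * y ^ 2 + y * (-2 * α * β + α + β))))) atTop
      (nhds ((∫ t in (0:ℝ)..x, f t) +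
        (x ^ α * (1+x) ^ (1-α-β) * (β*x-α) /
          (B * (α ^ 2 + β ^ 2 * x ^ 2 + x * (-2 * α * β + α + β))) - 0))) :=
    tendsto_const_nhds.add (tendsto_const_nhds.sub (tends_zero hα hβ hB))
  have hfin := le_of_tendsto htend
    ((eventually_ge_atTop x).mono (fun y hy => hbound y hy))
  rw [ge_iff_le]
  have goal_eq : (∫ t in (0:ℝ)..x,
      t ^ (α - 1) * (1 + t) ^ (-α - β) / (Real.Gamma α * Real.Gamma β / Real.Gamma (α + β)))
      = ∫ t in (0:ℝ)..x, f t := rfl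
  rw [goal_eq]
  linarith
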